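/- Let σ ∈ 𝒞_q with des(σ) = d, let p = (p₁,…,p_q) be a non-negative integer vector with p ≠ 0, and let B = A + P be the transition matrix of the pair (σ, p), where A is the transition matrix of σ and P is the q × q matrix whose every column equals p. Set k = d + Σᵢ pᵢ. Then there is a unique probability vector ℓ ∈ ℝ^q with Bℓ = kℓ; moreover ℓ has strictly positive components and satisfies ℓ = lim_{n→∞} (1/kⁿ) Bⁿ v for every probability vector v ∈ ℝ^q. -/

import Mathlib

open scoped Classical

noncomputable section

/-- The representative of `i : ZMod q` in `{1, …, q}`. -/
def rep (q : ℕ) [NeZero q] (i : ZMod q) : ℕ :=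
  if i = 0 then q else i.val

/-- The rotation `ρ : i ↦ i + 1 (mod q)` of `ZMod q`. -/
def rotPerm (q : ℕ) : Equiv.Perm (ZMod q) :=
  Equiv.addRight 1

/-- The descent number `des σ`: the number of `i ∈ ZMod q` with `σ(i) > σ(i+1)`,
values compared via their representatives in `{1, …, q}`. -/
def desNum (q : ℕ) [NeZero q] (σ : Equiv.Perm (ZMod q)) : ℕ :=
  (Finset.univ.filter fun i : ZMod q => rep q (σ (i + 1)) < rep q (σ i)).card

/-- `σ` is a `q`-cycle, i.e. it acts transitively on `ZMod q`. -/
def IsQCycle (q : ℕ) (σ : Equiv.Perm (ZMod q)) : Prop :=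
  ∀ i j : ZMod q, ∃ n : ℕ, (σ ^ n) i = j

/-- The transition matrix of `σ`: the `(i,j)` entry is `1` if `j` lies in the
cyclic interval `[σ(i), σ(i+1))` of `ZMod q` and `0` otherwise. -/
def transMatrix (q : ℕ) [NeZero q] (σ : Equiv.Perm (ZMod q)) :
    Matrix (ZMod q) (ZMod q) ℝ :=
  Matrix.of fun i j => if (j - σ i).val < (σ (i + 1) - σ i).val then (1 : ℝ) else 0

/-- A probability vector: non-negative components summing to `1`. -/
def IsProbVec (q : ℕ) [NeZero q] (v : ZMod q → ℝ) : Prop :=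
  (∀ i, 0 ≤ v i) ∧ ∑ i, v i = 1

/-- The symmetry order of `σ`: the order of the stabilizer of `σ` in the rotation
group `⟨ρ⟩` acting by conjugation. -/
def symOrder (q : ℕ) [NeZero q] (σ : Equiv.Perm (ZMod q)) : ℕ :=
  ((Finset.range q).filter fun j => rotPerm q ^ j * σ * (rotPerm q ^ j)⁻¹ = σ).card

/-- `F : ℝ → ℝ` is a lift of a degree `k` covering map of `ℝ/ℤ`:
a homeomorphism of `ℝ` with `F (t+1) = F t + k`. -/
def IsDegreeLift (k : ℕ) (F : ℝ → ℝ) : Prop :=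
  Continuous F ∧ StrictMono F ∧ ∀ t, F (t + 1) = F t + k

/-- The fixed point of the circle map corresponding to `u` (a point with
`F u - u ∈ ℤ`) is topologically repelling: `t ↦ F t - t` is strictly increasing
in a neighborhood of `u`. -/
def TopRepelling (F : ℝ → ℝ) (u : ℝ) : Prop :=
  ∃ ε > 0, StrictMonoOn (fun t => F t - t) (Set.Ioo (u - ε) (u + ε))

/-- `x : ZMod q → ℝ` is a period `q` orbit realizing `σ` for the circle map with
lift `F`: the points `x i` lie in `(0,1)` and are increasing with respect to the
representatives `{1, …, q}` (so that `0, x₁, …, x_q` are in positive cyclic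
order), and on the circle `f(x i) = x (σ i)` for all `i`. -/
def IsRealization (q : ℕ) [NeZero q] (σ : Equiv.Perm (ZMod q))
    (F : ℝ → ℝ) (x : ZMod q → ℝ) : Prop :=
  (∀ i, x i ∈ Set.Ioo (0 : ℝ) 1) ∧
  (∀ i j : ZMod q, rep q i < rep q j → x i < x j) ∧
  (∀ i, ∃ m : ℤ, F (x i) = x (σ i) + m)

/-- A realization of `σ` under the multiplication map `m_k : x ↦ kx (mod ℤ)`. -/
def MkRealization (q k : ℕ) [NeZero q] (σ : Equiv.Perm (ZMod q)) (x : ZMod q → ℝ) : Prop :=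
  IsRealization q σ (fun t => (k : ℝ) * t) x

/-- The upper endpoint (as a real number) of the partition interval
`I i = [x i, x (i+1)]`; for `i = 0 ≡ q` the interval wraps around `0 ∈ ℝ/ℤ`
and the endpoint is `x 1 + 1`. -/
def upperPt (q : ℕ) [NeZero q] (x : ZMod q → ℝ) (i : ZMod q) : ℝ :=
  if i = 0 then x 1 + 1 else x (i + 1)

/-- The `i`-th component of the fixed point distribution: the number of fixed
points of `m_k` (the points `j/(k-1) (mod ℤ)`) in the interior of the partition
interval `I i`. -/
def fixDist (q k : ℕ) [NeZero q] (x : ZMod q → ℝ) (i : ZMod q) : ℕ :=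
  ((Finset.Icc 1 (2 * (k - 1))).filter fun j : ℕ =>
    x i < (j : ℝ) / ((k : ℝ) - 1) ∧ (j : ℝ) / ((k : ℝ) - 1) < upperPt q x i).card

/-- The number of fixed points of `m_k` in the interval `(0, x 1)`. -/
def countFixBelow (q k : ℕ) [NeZero q] (x : ZMod q → ℝ) : ℕ :=
  ((Finset.range (k - 1)).filter fun j : ℕ =>
    0 < j ∧ (j : ℝ) / ((k : ℝ) - 1) < x 1).card

/-- The `m`-th component of the (cumulative) deployment vector: the number of
orbit points in `(0, m/(k-1))`. -/
def depCount (q k : ℕ) [NeZero q] (x : ZMod q → ℝ) (m : ℕ) : ℕ :=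
  (Finset.univ.filter fun j : ZMod q => x j < (m : ℝ) / ((k : ℝ) - 1)).card

/-- The rank of a marked index `i` among the marked indices `i₁ < ⋯ < i_{d-1}`
(ordered by their representatives in `{1, …, q}`). -/
def markRank (q : ℕ) [NeZero q] (σ : Equiv.Perm (ZMod q)) (i : ZMod q) : ℕ :=
  (Finset.univ.filter fun i' : ZMod q =>
    transMatrix q σ i' i' = 1 ∧ rep q i' ≤ rep q i).card

namespace PFaux
variable {q : ℕ} [NeZero q]

lemma val_inj (x y : ZMod q) (h : x.val = y.val) : x = y := by
  have := congrArg (Nat.cast : ℕ → ZMod q) h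
  rwa [ZMod.natCast_rightInverse x, ZMod.natCast_rightInverse y] at this

lemma val_sub_char (x y : ZMod q) :
    (x - y).val = if y.val ≤ x.val then x.val - y.val else x.val + q - y.val := by
  have h1 : (x - y) + y = x := sub_add_cancel x y
  have h2 : ((x - y).val + y.val) % q = x.val := by
    rw [← ZMod.val_add, h1]
  have b1 := ZMod.val_lt (x - y)
  have b2 := ZMod.val_lt y
  have b3 := ZMod.val_lt x
  rcases lt_or_ge ((x - y).val + y.val) q with h | h
  · rw [Nat.mod_eq_of_lt h] at h2
    split_ifs <;> omega
  · rw [Nat.mod_eq_sub_mod h, Nat.mod_eq_of_lt (by omega)] at h2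
    split_ifs <;> omega

lemma one_ne_zero' (hq : 2 ≤ q) : (1 : ZMod q) ≠ 0 := by
  haveI : Fact (1 < q) := ⟨by omega⟩
  intro h
  have h1 : (1 : ZMod q).val = 1 := ZMod.val_one q
  rw [h, ZMod.val_zero] at h1
  omega

lemma sne (hq : 2 ≤ q) (σ : Equiv.Perm (ZMod q)) (i : ZMod q) : σ (i + 1) ≠ σ i := by
  intro h
  have h2 := σ.injective h
  have : (1 : ZMod q) = 0 := by
    have := congrArg (fun x => x - i) h2
    simpa using this
  exact one_ne_zero' hq this

lemma len_pos (hq : 2 ≤ q) (σ : Equiv.Perm (ZMod q)) (i : ZMod q) :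
    1 ≤ (σ (i + 1) - σ i).val := by
  rw [Nat.one_le_iff_ne_zero]
  intro h
  rw [ZMod.val_eq_zero, sub_eq_zero] at h
  exact sne hq σ i h

lemma zero_mem_iff (hq : 2 ≤ q) (σ : Equiv.Perm (ZMod q)) (i : ZMod q) :
    ((0 : ZMod q) - σ i).val < (σ (i + 1) - σ i).val ↔
      rep q (σ (i + 1)) < rep q (σ i) := by
  have hL := val_sub_char (σ (i + 1)) (σ i)
  have h0 := val_sub_char (0 : ZMod q) (σ i)
  rw [ZMod.val_zero] at h0
  have hav := ZMod.val_lt (σ i)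
  have hbv := ZMod.val_lt (σ (i + 1))
  have hlp := len_pos hq σ i
  have hll := ZMod.val_lt (σ (i + 1) - σ i)
  have hne : (σ (i + 1)).val ≠ (σ i).val := fun h => sne hq σ i (val_inj _ _ h)
  have hra : rep q (σ i) = if (σ i).val = 0 then q else (σ i).val := by
    unfold rep; exact if_congr (ZMod.val_eq_zero _).symm rfl rfl
  have hrb : rep q (σ (i + 1)) = if (σ (i + 1)).val = 0 then q else (σ (i + 1)).val := by
    unfold rep; exact if_congr (ZMod.val_eq_zero _).symm rfl rfl
  rw [hra, hrb]
  split_ifs at hL h0 ⊢ <;> omega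

lemma step (hq : 2 ≤ q) (σ : Equiv.Perm (ZMod q)) (i j : ZMod q) :
    transMatrix q σ i j - transMatrix q σ i (j + 1)
      = (if σ (i + 1) = j + 1 then (1 : ℝ) else 0)
        - (if σ i = j + 1 then (1 : ℝ) else 0) := by
  haveI : Fact (1 < q) := ⟨by omega⟩
  have hlp := len_pos hq σ i
  have hll := ZMod.val_lt (σ (i + 1) - σ i)
  simp only [transMatrix, Matrix.of_apply]
  by_cases hb : σ (i + 1) = j + 1 <;> by_cases ha : σ i = j + 1
  · exact absurd (hb.trans ha.symm) (sne hq σ i)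
  · have e2 : j + 1 - σ i = σ (i + 1) - σ i := by rw [hb]
    have e1 : j - σ i = (σ (i + 1) - σ i) - 1 := by rw [hb]; ring
    have hv1 : (j - σ i).val = (σ (i + 1) - σ i).val - 1 := by
      rw [e1, val_sub_char, ZMod.val_one, if_pos hlp]
    rw [if_pos hb, if_neg ha, if_pos (by omega : (j - σ i).val < (σ (i+1) - σ i).val),
      if_neg (by rw [e2]; omega)]
  · have e2 : j + 1 - σ i = 0 := by rw [ha]; ring
    have e1 : j - σ i = 0 - 1 := by rw [ha]; ring
    have hv1 : (j - σ i).val = q - 1 := by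
      rw [e1, val_sub_char, ZMod.val_one, ZMod.val_zero, if_neg (by omega)]; omega
    rw [if_neg hb, if_pos ha, if_neg (by omega), if_pos (by rw [e2, ZMod.val_zero]; omega)]
  · have hM1 : 1 ≤ (j + 1 - σ i).val := by
      rw [Nat.one_le_iff_ne_zero]
      intro h
      rw [ZMod.val_eq_zero, sub_eq_zero] at h
      exact ha h.symm
    have hMne : (j + 1 - σ i).val ≠ (σ (i + 1) - σ i).val := by
      intro h
      have := val_inj _ _ h
      rw [sub_left_inj] at this
      exact hb this.symm
    have e1 : j - σ i = (j + 1 - σ i) - 1 := by ring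
    have hv1 : (j - σ i).val = (j + 1 - σ i).val - 1 := by
      rw [e1, val_sub_char, ZMod.val_one, if_pos hM1]
    rw [if_neg hb, if_neg ha]
    by_cases hc : (j + 1 - σ i).val < (σ (i + 1) - σ i).val
    · rw [if_pos hc, if_pos (by omega)]; norm_num
    · rw [if_neg hc, if_neg (by omega)]

end PFaux

namespace PFaux
variable {q : ℕ} [NeZero q]

lemma sum_ind_eq_one (c : ZMod q) : ∑ i : ZMod q, (if i = c then (1:ℝ) else 0) = 1 := by
  rw [Finset.sum_ite_eq' Finset.univ c (fun _ => (1:ℝ))]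
  simp

lemma colsum_succ (hq : 2 ≤ q) (σ : Equiv.Perm (ZMod q)) (j : ZMod q) :
    ∑ i, transMatrix q σ i j = ∑ i, transMatrix q σ i (j + 1) := by
  have h : ∑ i, (transMatrix q σ i j - transMatrix q σ i (j + 1)) = 0 := by
    rw [Finset.sum_congr rfl (fun i _ => step hq σ i j)]
    rw [Finset.sum_sub_distrib]
    have h1 : ∑ i : ZMod q, (if σ (i + 1) = j + 1 then (1:ℝ) else 0) = 1 := by
      have e : ∀ i : ZMod q, (if σ (i + 1) = j + 1 then (1:ℝ) else 0)
          = (if i = σ.symm (j + 1) - 1 then (1:ℝ) else 0) := by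
        intro i
        apply if_congr _ rfl rfl
        rw [← Equiv.eq_symm_apply]
        constructor
        · intro h; rw [← h]; ring
        · intro h; rw [h]; ring
      rw [Finset.sum_congr rfl (fun i _ => e i), sum_ind_eq_one]
    have h2 : ∑ i : ZMod q, (if σ i = j + 1 then (1:ℝ) else 0) = 1 := by
      have e : ∀ i : ZMod q, (if σ i = j + 1 then (1:ℝ) else 0)
          = (if i = σ.symm (j + 1) then (1:ℝ) else 0) := by
        intro i
        exact if_congr (by rw [← Equiv.eq_symm_apply]) rfl rfl
      rw [Finset.sum_congr rfl (fun i _ => e i), sum_ind_eq_one]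
    rw [h1, h2]; ring
  rw [Finset.sum_sub_distrib] at h
  linarith

lemma colsum_zero (hq : 2 ≤ q) (σ : Equiv.Perm (ZMod q)) :
    ∑ i, transMatrix q σ i 0 = (desNum q σ : ℝ) := by
  unfold desNum
  rw [← Finset.sum_boole]
  apply Finset.sum_congr rfl
  intro i _
  unfold transMatrix
  simp only [Matrix.of_apply]
  exact if_congr (zero_mem_iff hq σ i) rfl rfl

lemma colsum (hq : 2 ≤ q) (σ : Equiv.Perm (ZMod q)) (j : ZMod q) :
    ∑ i, transMatrix q σ i j = (desNum q σ : ℝ) := by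
  suffices h : ∀ n : ℕ, ∑ i, transMatrix q σ i (n : ZMod q) = (desNum q σ : ℝ) by
    have := h j.val
    rwa [ZMod.natCast_rightInverse j] at this
  intro n
  induction n with
  | zero => simpa using colsum_zero hq σ
  | succ n ih =>
    rw [show ((n + 1 : ℕ) : ZMod q) = (n : ZMod q) + 1 by push_cast; ring]
    rw [← colsum_succ hq σ]
    exact ih

lemma Adiag (hq : 2 ≤ q) (σ : Equiv.Perm (ZMod q)) (i : ZMod q) :
    transMatrix q σ i (σ i) = 1 := by
  unfold transMatrix
  simp only [Matrix.of_apply, sub_self, ZMod.val_zero]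
  rw [if_pos (by have := len_pos hq σ i; omega)]

lemma Ann (σ : Equiv.Perm (ZMod q)) (i j : ZMod q) : 0 ≤ transMatrix q σ i j := by
  unfold transMatrix
  simp only [Matrix.of_apply]
  split_ifs <;> norm_num

end PFaux


open Filter in
set_option maxHeartbeats 1000000 in
/-- Perron–Frobenius for the transition matrix `B = A + P` of a pair `(σ, p)`,
where `σ` is a `q`-cycle with `des σ = d`, `p ≠ 0` is a non-negative integer
vector, `P` has all columns equal to `p`, and `k = d + ∑ pᵢ`: there is a unique
probability vector `ℓ` with `Bℓ = kℓ`; it has strictly positive components and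
`ℓ = lim (1/kⁿ) Bⁿ v` for every probability vector `v`. -/
theorem pairTransMatrix_perron_frobenius (q d k : ℕ) [NeZero q] (hq : 2 ≤ q)
    (σ : Equiv.Perm (ZMod q)) (hσ : IsQCycle q σ) (hd : desNum q σ = d)
    (p : ZMod q → ℕ) (hp : p ≠ 0)
    (B : Matrix (ZMod q) (ZMod q) ℝ)
    (hB : B = transMatrix q σ + Matrix.of fun i _ : ZMod q => (p i : ℝ))
    (hk : k = d + ∑ i, p i) :
    (∃! ℓ : ZMod q → ℝ, IsProbVec q ℓ ∧ B.mulVec ℓ = (k : ℝ) • ℓ) ∧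
    (∀ ℓ : ZMod q → ℝ, IsProbVec q ℓ → B.mulVec ℓ = (k : ℝ) • ℓ →
      (∀ i, 0 < ℓ i) ∧
      ∀ v : ZMod q → ℝ, IsProbVec q v →
        Filter.Tendsto (fun n : ℕ => (1 / (k : ℝ) ^ n) • (B ^ n).mulVec v)
          Filter.atTop (nhds ℓ)) := by
  have hs : 1 ≤ ∑ i, p i := by
    rcases Nat.eq_zero_or_pos (∑ i, p i) with h | h
    · exfalso
      apply hp
      funext i
      have := (Finset.sum_eq_zero_iff.mp h) i (Finset.mem_univ i)
      simpa using this
    · exact h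
  set A := transMatrix q σ with hA
  have hcol : ∀ j, ∑ i, A i j = (d : ℝ) := by
    intro j
    rw [hA, PFaux.colsum hq σ j, hd]
  have hAnn : ∀ i j, 0 ≤ A i j := fun i j => PFaux.Ann σ i j
  have hk1 : 1 ≤ k := by omega
  have hkR : (0 : ℝ) < k := by exact_mod_cast hk1
  have hdk : (d : ℝ) < k := by
    have : d < k := by omega
    exact_mod_cast this
  have hkcast : ((k : ℕ) : ℝ) = (d : ℝ) + ∑ i, (p i : ℝ) := by
    rw [hk]; push_cast; ring
  have hBmv : ∀ (v : ZMod q → ℝ) i, B.mulVec v i = A.mulVec v i + (p i : ℝ) * ∑ j, v j := by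
    intro v i
    rw [hB]
    simp only [Matrix.mulVec, dotProduct, Matrix.add_apply, Matrix.of_apply, add_mul]
    rw [Finset.sum_add_distrib, Finset.mul_sum]
  have hBnn : ∀ i j, 0 ≤ B i j := by
    intro i j
    rw [hB]
    simp only [Matrix.add_apply, Matrix.of_apply]
    have := hAnn i j
    positivity
  have hsumA : ∀ (v : ZMod q → ℝ), ∑ i, A.mulVec v i = (d : ℝ) * ∑ j, v j := by
    intro v
    simp only [Matrix.mulVec, dotProduct]
    rw [Finset.sum_comm, Finset.mul_sum]
    apply Finset.sum_congr rfl
    intro j _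
    rw [← Finset.sum_mul, hcol]
  have hsumB : ∀ v : ZMod q → ℝ, ∑ i, B.mulVec v i = (k : ℝ) * ∑ i, v i := by
    intro v
    calc ∑ i, B.mulVec v i = ∑ i, (A.mulVec v i + (p i : ℝ) * ∑ j, v j) :=
          Finset.sum_congr rfl (fun i _ => hBmv v i)
      _ = (d : ℝ) * ∑ j, v j + (∑ i, (p i : ℝ)) * ∑ j, v j := by
          rw [Finset.sum_add_distrib, hsumA, Finset.sum_mul]
      _ = (k : ℝ) * ∑ i, v i := by rw [hkcast]; ring
  have hnormA : ∀ u : ZMod q → ℝ, ∑ i, |A.mulVec u i| ≤ (d : ℝ) * ∑ i, |u i| := by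
    intro u
    calc ∑ i, |A.mulVec u i| ≤ ∑ i, ∑ j, A i j * |u j| := by
          apply Finset.sum_le_sum
          intro i _
          refine (Finset.abs_sum_le_sum_abs _ _).trans ?_
          apply Finset.sum_le_sum
          intro j _
          rw [abs_mul, abs_of_nonneg (hAnn i j)]
      _ = ∑ j, (∑ i, A i j) * |u j| := by
          rw [Finset.sum_comm]
          exact Finset.sum_congr rfl (fun j _ => (Finset.sum_mul _ _ _).symm)
      _ = (d : ℝ) * ∑ j, |u j| := by
          rw [Finset.mul_sum]
          exact Finset.sum_congr rfl (fun j _ => by rw [hcol])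
  have hcontr : ∀ v w : ZMod q → ℝ, ∑ i, v i = ∑ i, w i →
      ∑ i, |B.mulVec v i - B.mulVec w i| ≤ (d : ℝ) * ∑ i, |v i - w i| := by
    intro v w hvw
    have he : ∀ i, B.mulVec v i - B.mulVec w i = A.mulVec (v - w) i := by
      intro i
      rw [hBmv, hBmv, Matrix.mulVec_sub]
      simp only [Pi.sub_apply]
      rw [hvw]
      ring
    calc ∑ i, |B.mulVec v i - B.mulVec w i| = ∑ i, |A.mulVec (v - w) i| :=
          Finset.sum_congr rfl (fun i _ => by rw [he])
      _ ≤ (d : ℝ) * ∑ i, |(v - w) i| := hnormA (v - w)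
      _ = (d : ℝ) * ∑ i, |v i - w i| := rfl
  -- eigenvector existence
  have hcolB : ∀ j, ∑ i, B i j = (k : ℝ) := by
    intro j
    rw [hB]
    simp only [Matrix.add_apply, Matrix.of_apply]
    rw [Finset.sum_add_distrib, hcol, hkcast]
  have hdet : (((k : ℝ) • (1 : Matrix (ZMod q) (ZMod q) ℝ) - B)).det = 0 := by
    rw [← Matrix.exists_vecMul_eq_zero_iff]
    refine ⟨(fun _ => (1 : ℝ)), ?_, ?_⟩
    · intro h
      have := congrFun h 0
      simp at this
    · funext j
      simp only [Matrix.vecMul, dotProduct, Matrix.sub_apply, Matrix.smul_apply,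
        Matrix.one_apply, smul_eq_mul, one_mul, Pi.zero_apply]
      rw [Finset.sum_sub_distrib, hcolB]
      have h1 : ∑ i : ZMod q, (k : ℝ) * (if i = j then (1 : ℝ) else 0) = (k : ℝ) := by
        rw [← Finset.mul_sum, PFaux.sum_ind_eq_one]
        ring
      rw [h1, sub_self]
  obtain ⟨u, hu0, huv⟩ := Matrix.exists_mulVec_eq_zero_iff.mpr hdet
  have hBu : B.mulVec u = (k : ℝ) • u := by
    have h1 : (k : ℝ) • u - B.mulVec u = 0 := by
      have := huv
      rwa [Matrix.sub_mulVec, Matrix.smul_mulVec, Matrix.one_mulVec] at this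
    have := sub_eq_zero.mp h1
    rw [← this]
  have habs_pos : ∀ x : ZMod q → ℝ, x ≠ 0 → 0 < ∑ i, |x i| := by
    intro x hx
    obtain ⟨i, hi⟩ := Function.ne_iff.mp hx
    exact Finset.sum_pos' (fun j _ => abs_nonneg _) ⟨i, Finset.mem_univ i, abs_pos.mpr hi⟩
  have hsumu : ∑ i, u i ≠ 0 := by
    intro h0
    have h1 : ∀ i, B.mulVec u i = A.mulVec u i := fun i => by
      rw [hBmv, h0, mul_zero, add_zero]
    have h3 : (k : ℝ) * ∑ i, |u i| ≤ (d : ℝ) * ∑ i, |u i| := by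
      calc (k : ℝ) * ∑ i, |u i| = ∑ i, |(k : ℝ) * u i| := by
            rw [Finset.mul_sum]
            exact Finset.sum_congr rfl (fun i _ => by
              rw [abs_mul, abs_of_nonneg hkR.le])
        _ = ∑ i, |B.mulVec u i| := by
            apply Finset.sum_congr rfl
            intro i _
            rw [hBu]
            simp
        _ = ∑ i, |A.mulVec u i| := Finset.sum_congr rfl (fun i _ => by rw [h1])
        _ ≤ (d : ℝ) * ∑ i, |u i| := hnormA u
    have hupos := habs_pos u hu0
    nlinarith
  set ℓ₀ : ZMod q → ℝ := (∑ i, u i)⁻¹ • u with hℓ₀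
  have hl0sum : ∑ i, ℓ₀ i = 1 := by
    rw [hℓ₀]
    simp only [Pi.smul_apply, smul_eq_mul]
    rw [← Finset.mul_sum, inv_mul_cancel₀ hsumu]
  have hBl0 : B.mulVec ℓ₀ = (k : ℝ) • ℓ₀ := by
    rw [hℓ₀, Matrix.mulVec_smul, hBu, smul_comm]
  -- iteration
  set w : (ZMod q → ℝ) → ℕ → (ZMod q → ℝ) :=
    fun v n => (1 / (k : ℝ) ^ n) • (B ^ n).mulVec v with hw
  have hw0 : ∀ v, w v 0 = v := by
    intro v
    rw [hw]
    simp [Matrix.one_mulVec]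
  have hwsucc : ∀ v n, w v (n + 1) = (1 / (k : ℝ)) • B.mulVec (w v n) := by
    intro v n
    rw [hw]
    simp only []
    rw [Matrix.mulVec_smul, smul_smul, Matrix.mulVec_mulVec, ← pow_succ']
    congr 1
    rw [pow_succ']
    field_simp
  have hwsum : ∀ v : ZMod q → ℝ, ∑ i, v i = 1 → ∀ n, ∑ i, w v n i = 1 := by
    intro v hv n
    induction n with
    | zero => rw [hw0]; exact hv
    | succ n ih =>
      rw [hwsucc]
      simp only [Pi.smul_apply, smul_eq_mul]
      rw [← Finset.mul_sum, hsumB, ih]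
      field_simp
  have hwnn : ∀ v : ZMod q → ℝ, (∀ i, 0 ≤ v i) → ∀ n i, 0 ≤ w v n i := by
    intro v hv n
    induction n with
    | zero => rw [hw0]; exact hv
    | succ n ih =>
      intro i
      rw [hwsucc]
      simp only [Pi.smul_apply, smul_eq_mul]
      have h1 : 0 ≤ B.mulVec (w v n) i :=
        Finset.sum_nonneg (fun j _ => mul_nonneg (hBnn i j) (ih j))
      positivity
  have hiter : ∀ ℓ : ZMod q → ℝ, ∑ i, ℓ i = 1 → B.mulVec ℓ = (k : ℝ) • ℓ →
      ∀ v : ZMod q → ℝ, ∑ i, v i = 1 → ∀ n,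
      ∑ i, |w v n i - ℓ i| ≤ ((d : ℝ) / k) ^ n * ∑ i, |v i - ℓ i| := by
    intro ℓ hl1 hl2 v hv n
    induction n with
    | zero => rw [hw0]; simp
    | succ n ih =>
      have hws := hwsum v hv n
      have hfix : ∀ i, ℓ i = (1 / (k : ℝ)) * B.mulVec ℓ i := by
        intro i
        rw [hl2]
        simp only [Pi.smul_apply, smul_eq_mul]
        field_simp
      calc ∑ i, |w v (n + 1) i - ℓ i|
          = ∑ i, (1 / (k : ℝ)) * |B.mulVec (w v n) i - B.mulVec ℓ i| := by
            apply Finset.sum_congr rfl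
            intro i _
            rw [hwsucc]
            simp only [Pi.smul_apply, smul_eq_mul]
            rw [hfix i, ← mul_sub, abs_mul, abs_of_nonneg (by positivity : (0:ℝ) ≤ 1 / (k:ℝ))]
        _ = (1 / (k : ℝ)) * ∑ i, |B.mulVec (w v n) i - B.mulVec ℓ i| := by
            rw [Finset.mul_sum]
        _ ≤ (1 / (k : ℝ)) * ((d : ℝ) * ∑ i, |w v n i - ℓ i|) := by
            apply mul_le_mul_of_nonneg_left _ (by positivity)
            exact hcontr _ _ (by rw [hws, hl1])
        _ ≤ (1 / (k : ℝ)) * ((d : ℝ) * (((d : ℝ) / k) ^ n * ∑ i, |v i - ℓ i|)) :=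
            mul_le_mul_of_nonneg_left
              (mul_le_mul_of_nonneg_left ih (Nat.cast_nonneg d)) (by positivity)
        _ = ((d : ℝ) / k) ^ (n + 1) * ∑ i, |v i - ℓ i| := by
            ring
  have hratio0 : (0 : ℝ) ≤ (d : ℝ) / k := by positivity
  have hratio1 : (d : ℝ) / k < 1 := (div_lt_one hkR).mpr hdk
  have hconv : ∀ ℓ : ZMod q → ℝ, ∑ i, ℓ i = 1 → B.mulVec ℓ = (k : ℝ) • ℓ →
      ∀ v : ZMod q → ℝ, ∑ i, v i = 1 →
      Filter.Tendsto (fun n => w v n) Filter.atTop (nhds ℓ) := by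
    intro ℓ hl1 hl2 v hv
    rw [tendsto_pi_nhds]
    intro i
    have key : ∀ n, |w v n i - ℓ i| ≤ ((d : ℝ) / k) ^ n * ∑ j, |v j - ℓ j| := by
      intro n
      refine le_trans ?_ (hiter ℓ hl1 hl2 v hv n)
      exact Finset.single_le_sum (f := fun j => |w v n j - ℓ j|)
        (fun j _ => abs_nonneg _) (Finset.mem_univ i)
    have h0 : Filter.Tendsto (fun n : ℕ => ((d : ℝ) / k) ^ n * ∑ j, |v j - ℓ j|)
        Filter.atTop (nhds 0) := by
      have := (tendsto_pow_atTop_nhds_zero_of_lt_one hratio0 hratio1).mul_const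
        (∑ j, |v j - ℓ j|)
      simpa using this
    have habs : Filter.Tendsto (fun n => |w v n i - ℓ i|) Filter.atTop (nhds 0) :=
      squeeze_zero (fun n => abs_nonneg _) key h0
    have hsub : Filter.Tendsto (fun n => w v n i - ℓ i) Filter.atTop (nhds 0) :=
      squeeze_zero_norm (fun n => by simpa [Real.norm_eq_abs] using key n) h0
    have := hsub.add_const (ℓ i)
    simpa using this
  -- ℓ₀ is a probability vector
  have huni : IsProbVec q (fun _ : ZMod q => (q : ℝ)⁻¹) := by
    constructor
    · intro i
      positivity
    · rw [Finset.sum_const, Finset.card_univ, ZMod.card, nsmul_eq_mul]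
      rw [mul_inv_cancel₀ (Nat.cast_ne_zero.mpr (NeZero.ne q))]
  have hl0nn : ∀ i, 0 ≤ ℓ₀ i := by
    intro i
    have hc := hconv ℓ₀ hl0sum hBl0 _ huni.2
    have hti : Filter.Tendsto (fun n => w (fun _ => (q : ℝ)⁻¹) n i) Filter.atTop
        (nhds (ℓ₀ i)) := (tendsto_pi_nhds.mp hc) i
    exact ge_of_tendsto' hti (fun n => hwnn _ (fun _ => by positivity) n i)
  have hl0prob : IsProbVec q ℓ₀ := ⟨hl0nn, hl0sum⟩
  -- uniqueness
  have huniq : ∀ ℓ' : ZMod q → ℝ, IsProbVec q ℓ' → B.mulVec ℓ' = (k : ℝ) • ℓ' → ℓ' = ℓ₀ := by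
    intro ℓ' hp' hB'
    have h1 := hiter ℓ₀ hl0sum hBl0 ℓ' hp'.2 1
    have hw1 : w ℓ' 1 = ℓ' := by
      funext i
      rw [hwsucc, hw0]
      simp only [Pi.smul_apply, smul_eq_mul]
      rw [hB']
      simp only [Pi.smul_apply, smul_eq_mul]
      field_simp
    rw [hw1, pow_one] at h1
    have hS0 : ∑ i, |ℓ' i - ℓ₀ i| = 0 := by
      have hSnn : 0 ≤ ∑ i, |ℓ' i - ℓ₀ i| := Finset.sum_nonneg (fun i _ => abs_nonneg _)
      nlinarith
    funext i
    have := (Finset.sum_eq_zero_iff_of_nonneg (fun j _ => abs_nonneg _)).mp hS0 i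
      (Finset.mem_univ i)
    have := abs_eq_zero.mp this
    linarith [this]
  refine ⟨⟨ℓ₀, ⟨hl0prob, hBl0⟩, fun ℓ' h => huniq ℓ' h.1 h.2⟩, ?_⟩
  intro ℓ hℓp hℓB
  constructor
  · -- positivity
    have hstep : ∀ i, ℓ (σ i) + (p i : ℝ) ≤ (k : ℝ) * ℓ i := by
      intro i
      have h1 : B.mulVec ℓ i = (k : ℝ) * ℓ i := by
        rw [hℓB]
        simp
      have h2 : ℓ (σ i) ≤ A.mulVec ℓ i := by
        have h : A i (σ i) * ℓ (σ i) ≤ ∑ j, A i j * ℓ j := Finset.single_le_sum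
          (f := fun j => A i j * ℓ j)
          (fun j _ => mul_nonneg (hAnn i j) (hℓp.1 j)) (Finset.mem_univ (σ i))
        have hd1 : A i (σ i) = 1 := PFaux.Adiag hq σ i
        rw [hd1, one_mul] at h
        simpa [Matrix.mulVec, dotProduct] using h
      have h3 : B.mulVec ℓ i = A.mulVec ℓ i + (p i : ℝ) := by
        rw [hBmv, hℓp.2, mul_one]
      linarith
    have hchain : ∀ n i, ℓ ((σ ^ n) i) ≤ (k : ℝ) ^ n * ℓ i := by
      intro n
      induction n with
      | zero => intro i; simp
      | succ n ih =>
        intro i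
        have e : (σ ^ (n + 1)) i = (σ ^ n) (σ i) := by
          rw [pow_succ]
          rfl
        rw [e]
        calc ℓ ((σ ^ n) (σ i)) ≤ (k : ℝ) ^ n * ℓ (σ i) := ih (σ i)
          _ ≤ (k : ℝ) ^ n * ((k : ℝ) * ℓ i) := by
              have := hstep i
              have hpnn : (0:ℝ) ≤ (p i : ℝ) := Nat.cast_nonneg _
              have : ℓ (σ i) ≤ (k : ℝ) * ℓ i := by linarith
              have hkn : (0:ℝ) ≤ (k:ℝ) ^ n := by positivity
              nlinarith
          _ = (k : ℝ) ^ (n + 1) * ℓ i := by ring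
    obtain ⟨i0, hi0⟩ : ∃ i0, 1 ≤ p i0 := by
      by_contra h
      push_neg at h
      apply hp
      funext i
      have := h i
      simp only [Pi.zero_apply]
      omega
    have hli0 : 0 < ℓ i0 := by
      have h := hstep i0
      have h2 : 0 ≤ ℓ (σ i0) := hℓp.1 (σ i0)
      have h3 : (1 : ℝ) ≤ (p i0 : ℝ) := by exact_mod_cast hi0
      nlinarith
    intro i
    obtain ⟨n, hn⟩ := hσ i i0
    have := hchain n i
    rw [hn] at this
    have hkn : (0:ℝ) < (k:ℝ) ^ n := by positivity
    nlinarith [hℓp.1 i]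
  · intro v hv
    exact hconv ℓ hℓp.2 hℓB v hv.2
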